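/- arXiv:1001.4213 — 5 statements merged into one kernel-verified Lean document; each statement's English description precedes it below -/
import Mathlib

section
/- S ⊆ X(D) is an arc-reaching set of a digraph D if and only if S ∩ X(D⁻) is a point-reaching set of D⁻, where D⁻ is the induced subdigraph on the non-sink vertices; equivalently, arc-reaching sets of D are exactly the point-reaching sets of D⁻ together with arbitrary subsets of the sinks of D. -/
/-- Reachability by a directed walk (allowing the trivial walk). -/
def Reach {V : Type*} (A : V → V → Prop) : V → V → Prop := Relation.ReflTransGen A
/-- A set S is arc-reaching if for every arc (u,v), u is reachable from some vertex of S. -/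
def ArcReaching {V : Type*} (A : V → V → Prop) (S : Set V) : Prop :=
  ∀ u v : V, A u v → ∃ s ∈ S, Reach A s u

/-- A sink: a vertex of out-degree 0. -/
def Sink {V : Type*} (A : V → V → Prop) (a : V) : Prop := ∀ x : V, ¬ A a x

/-- Arc relation of D⁻, the induced subdigraph on the non-sink vertices. -/
def ArcMinus {V : Type*} (A : V → V → Prop) (x y : V) : Prop :=
  ¬ Sink A x ∧ ¬ Sink A y ∧ A x y

/-- S' is point-reaching in D⁻: every non-sink vertex is reachable in D⁻
from some vertex of S'. -/
def PointReachingMinus {V : Type*} (A : V → V → Prop) (S' : Set V) : Prop :=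
  ∀ v : V, ¬ Sink A v → ∃ s ∈ S', Relation.ReflTransGen (ArcMinus A) s v

theorem arcReaching_iff_pointReaching_minus {V : Type*} (A : V → V → Prop) (S : Set V) :
    (ArcReaching A S ↔ PointReachingMinus A (S ∩ {a | ¬ Sink A a})) ∧
    (ArcReaching A S ↔ ∃ S₀ J : Set V, PointReachingMinus A S₀ ∧
      (∀ a ∈ S₀, ¬ Sink A a) ∧ J ⊆ {a | Sink A a} ∧ S = S₀ ∪ J) := by
  have key : ∀ s u : V, Reach A s u → ¬ Sink A u →
      Relation.ReflTransGen (ArcMinus A) s u ∧ ¬ Sink A s := by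
    intro s u h hu
    induction h using Relation.ReflTransGen.head_induction_on with
    | refl => exact ⟨Relation.ReflTransGen.refl, hu⟩
    | head hab _ ih =>
      rcases ih with ⟨hr, hb⟩
      have hs : ¬ Sink A _ := fun hsk => hsk _ hab
      exact ⟨Relation.ReflTransGen.head ⟨hs, hb, hab⟩ hr, hs⟩
  have mono : ∀ s u : V, Relation.ReflTransGen (ArcMinus A) s u → Reach A s u := by
    intro s u h
    exact Relation.ReflTransGen.mono (fun x y (hxy : ArcMinus A x y) => hxy.2.2) s u h
  have h1 : ArcReaching A S ↔ PointReachingMinus A (S ∩ {a | ¬ Sink A a}) := by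
    constructor
    · intro hAR v hv
      simp only [Sink, not_forall, not_not] at hv
      obtain ⟨w, hw⟩ := hv
      obtain ⟨s, hs, hr⟩ := hAR v w hw
      obtain ⟨hr', hns⟩ := key s v hr (fun hsk => hsk w hw)
      exact ⟨s, ⟨hs, hns⟩, hr'⟩
    · intro hPR u v huv
      obtain ⟨s, ⟨hs, _⟩, hr⟩ := hPR u (fun hsk => hsk v huv)
      exact ⟨s, hs, mono s u hr⟩
  refine ⟨h1, ?_⟩
  constructor
  · intro hAR
    refine ⟨S ∩ {a | ¬ Sink A a}, S ∩ {a | Sink A a}, h1.mp hAR, fun a ha => ha.2,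
      fun a ha => ha.2, ?_⟩
    ext a
    by_cases h : Sink A a <;> simp [h]
  · rintro ⟨S₀, J, hPR, hns, hJ, rfl⟩
    intro u v huv
    obtain ⟨s, hs, hr⟩ := hPR u (fun hsk => hsk v huv)
    exact ⟨s, Or.inl hs, mono s u hr⟩
end

section
/- For any strong component C of a digraph D, either there is an initial strong component C₀ from which C is reachable in the condensation D*, or there is an in-ray in D* ending at C (i.e., an infinite sequence ..., C₂, C₁, C of distinct vertices of D* with an arc from C_{i+1} to C_i and from C₁ to C). -/
/-- The strong component of a vertex: all vertices mutually reachable with it. -/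
def SCC {V : Type*} (A : V → V → Prop) (v : V) : Set V :=
  {w | Reach A v w ∧ Reach A w v}

/-- A set is a strong component iff it is the strong component of some vertex. -/
def IsSCC {V : Type*} (A : V → V → Prop) (C : Set V) : Prop := ∃ v, C = SCC A v

/-- A strong component is initial if no arc enters it from outside. -/
def InitialSCC {V : Type*} (A : V → V → Prop) (C : Set V) : Prop :=
  IsSCC A C ∧ ∀ x y, A x y → y ∈ C → x ∈ C
/-- Arc relation of the condensation D*: between two distinct strong components,
when some arc of D goes from the first to the second. -/
def CondArc {V : Type*} (A : V → V → Prop) (C₁ C₂ : Set V) : Prop :=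
  IsSCC A C₁ ∧ IsSCC A C₂ ∧ C₁ ≠ C₂ ∧ ∃ x ∈ C₁, ∃ y ∈ C₂, A x y

lemma scc_mem_self {V : Type*} (A : V → V → Prop) (v : V) : v ∈ SCC A v :=
  ⟨Relation.ReflTransGen.refl, Relation.ReflTransGen.refl⟩

lemma scc_eq_of_mem {V : Type*} {A : V → V → Prop} {v w : V} (h : w ∈ SCC A v) :
    SCC A w = SCC A v := by
  obtain ⟨hvw, hwv⟩ := h
  ext x
  exact ⟨fun ⟨h1, h2⟩ => ⟨hvw.trans h1, h2.trans hwv⟩,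
         fun ⟨h1, h2⟩ => ⟨hwv.trans h1, h2.trans hvw⟩⟩

lemma reach_of_condArc {V : Type*} {A : V → V → Prop} {C₁ C₂ : Set V}
    (h : CondArc A C₁ C₂) {a b : V} (ha : a ∈ C₁) (hb : b ∈ C₂) : Reach A a b := by
  obtain ⟨⟨v₁, rfl⟩, ⟨v₂, rfl⟩, -, x, hx, y, hy, hxy⟩ := h
  exact ((ha.2.trans hx.1).trans (Relation.ReflTransGen.single hxy)).trans
    (hy.2.trans hb.1)

lemma reach_of_condPath {V : Type*} {A : V → V → Prop} {C₁ C₂ : Set V}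
    (h : Relation.ReflTransGen (CondArc A) C₁ C₂) (h₁ : IsSCC A C₁)
    {a b : V} (ha : a ∈ C₁) (hb : b ∈ C₂) : Reach A a b := by
  induction h using Relation.ReflTransGen.head_induction_on generalizing a with
  | refl =>
    obtain ⟨v, rfl⟩ := h₁
    exact ha.2.trans hb.1
  | head harc _ ih =>
    rename_i D E _
    obtain ⟨w, hw⟩ := harc.2.1
    have hwE : w ∈ E := hw ▸ scc_mem_self A w
    exact (reach_of_condArc harc ha hwE).trans (ih harc.2.1 hwE)

lemma cond_acyclic {V : Type*} {A : V → V → Prop} {C₁ C₂ : Set V}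
    (h1 : CondArc A C₁ C₂) (h2 : Relation.ReflTransGen (CondArc A) C₂ C₁) : False := by
  have h1' := h1
  obtain ⟨hS₁, hS₂, hne, -⟩ := h1'
  obtain ⟨v₁, rfl⟩ := hS₁
  obtain ⟨v₂, rfl⟩ := hS₂
  have r12 : Reach A v₁ v₂ := reach_of_condArc h1 (scc_mem_self A v₁) (scc_mem_self A v₂)
  have r21 : Reach A v₂ v₁ := reach_of_condPath h2 ⟨v₂, rfl⟩ (scc_mem_self A v₂)
    (scc_mem_self A v₁)
  exact hne (scc_eq_of_mem (⟨r12, r21⟩ : v₂ ∈ SCC A v₁)).symm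

theorem initial_reaches_or_inray {V : Type*} (A : V → V → Prop)
    (C : Set V) (hC : IsSCC A C) :
    (∃ C₀ : Set V, InitialSCC A C₀ ∧ Relation.ReflTransGen (CondArc A) C₀ C) ∨
    (∃ f : ℕ → Set V, f 0 = C ∧ Function.Injective f ∧
      (∀ i, IsSCC A (f i)) ∧ ∀ i, CondArc A (f (i + 1)) (f i)) := by
  by_cases hinit : ∃ C₀ : Set V, InitialSCC A C₀ ∧ Relation.ReflTransGen (CondArc A) C₀ C
  · exact Or.inl hinit
  right
  push_neg at hinit
  -- every SCC reaching C has a proper in-neighbour that also reaches C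
  have step : ∀ D : Set V, IsSCC A D → Relation.ReflTransGen (CondArc A) D C →
      ∃ D', IsSCC A D' ∧ Relation.ReflTransGen (CondArc A) D' C ∧ CondArc A D' D := by
    intro D hD hpath
    have hni : ¬ InitialSCC A D := fun h => hinit D h hpath
    rw [InitialSCC] at hni
    push_neg at hni
    obtain ⟨x, y, hxy, hyD, hxD⟩ := hni hD
    refine ⟨SCC A x, ⟨x, rfl⟩, ?_, ?_⟩
    · exact Relation.ReflTransGen.head
        ⟨⟨x, rfl⟩, hD, fun h => hxD (h ▸ scc_mem_self A x),
          x, scc_mem_self A x, y, hyD, hxy⟩ hpath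
    · exact ⟨⟨x, rfl⟩, hD, fun h => hxD (h ▸ scc_mem_self A x),
        x, scc_mem_self A x, y, hyD, hxy⟩
  set T := {D : Set V // IsSCC A D ∧ Relation.ReflTransGen (CondArc A) D C} with hT
  have next : ∀ t : T, ∃ t' : T, CondArc A t'.1 t.1 := by
    intro t
    obtain ⟨D', h1, h2, h3⟩ := step t.1 t.2.1 t.2.2
    exact ⟨⟨D', h1, h2⟩, h3⟩
  choose nxt hnxt using next
  set g : ℕ → T := fun n => nxt^[n] ⟨C, hC, Relation.ReflTransGen.refl⟩ with hg
  have hgsucc : ∀ n, g (n + 1) = nxt (g n) := by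
    intro n; simp [hg, Function.iterate_succ_apply']
  have harc : ∀ n, CondArc A (g (n + 1)).1 (g n).1 := by
    intro n; rw [hgsucc]; exact hnxt (g n)
  have hpath : ∀ n k, Relation.ReflTransGen (CondArc A) (g (n + k)).1 (g n).1 := by
    intro n k
    induction k with
    | zero => exact Relation.ReflTransGen.refl
    | succ k ih => exact Relation.ReflTransGen.head (harc (n + k)) ih
  refine ⟨fun n => (g n).1, rfl, ?_, fun i => (g i).2.1, harc⟩
  intro i j hij
  by_contra hne
  wlog hlt : i < j generalizing i j
  · exact this hij.symm (Ne.symm hne) (by omega)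
  obtain ⟨k, rfl⟩ : ∃ k, j = (i + 1) + k := ⟨j - i - 1, by omega⟩
  have hp := hpath (i + 1) k
  simp only [] at hij
  rw [← hij] at hp
  exact cond_acyclic (harc i) hp
end

section
/- A set A is a point-reaching set of a digraph D if and only if A contains at least one vertex from every initial strong component of D, and at least one vertex from every shadow R'(u) that contains no initial strong component. -/
/-- A set S is point-reaching if every vertex is reachable from some vertex of S. -/
def PointReaching {V : Type*} (A : V → V → Prop) (S : Set V) : Prop :=
  ∀ v : V, ∃ s ∈ S, Reach A s v
/-- The shadow of u: all vertices from which u is reachable. -/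
def Shadow {V : Type*} (A : V → V → Prop) (u : V) : Set V := {z | Reach A z u}

theorem pointReaching_characterization {V : Type*} (A : V → V → Prop) (S : Set V) :
    PointReaching A S ↔
      ((∀ C : Set V, InitialSCC A C → ∃ a ∈ S, a ∈ C) ∧
       (∀ u : V, ¬ (∃ C : Set V, InitialSCC A C ∧ C ⊆ Shadow A u) →
         ∃ a ∈ S, a ∈ Shadow A u)) := by
  constructor
  · intro hS
    constructor
    · rintro C ⟨⟨v, rfl⟩, hinit⟩
      obtain ⟨s, hsS, hsv⟩ := hS v
      refine ⟨s, hsS, ?_⟩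
      clear hsS
      have hv : v ∈ SCC A v := ⟨Relation.ReflTransGen.refl, Relation.ReflTransGen.refl⟩
      induction hsv using Relation.ReflTransGen.head_induction_on with
      | refl => exact hv
      | head hxy _ ih => exact hinit _ _ hxy ih
    · intro u _
      exact hS u
  · rintro ⟨h1, h2⟩ v
    by_cases h : ∃ C : Set V, InitialSCC A C ∧ C ⊆ Shadow A v
    · obtain ⟨C, hC, hsub⟩ := h
      obtain ⟨a, haS, haC⟩ := h1 C hC
      exact ⟨a, haS, hsub haC⟩
    · exact h2 v h
end

section
/- If A is a point-reaching set of a digraph D and u is a vertex whose shadow R'(u) contains no initial strong component, then A ∩ R'(u) is infinite. -/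
theorem pointReaching_infinite_in_shadow {V : Type*} (A : V → V → Prop)
    (S : Set V) (hS : PointReaching A S) (u : V)
    (hu : ¬ ∃ C : Set V, InitialSCC A C ∧ C ⊆ Shadow A u) :
    (S ∩ Shadow A u).Infinite := by
  have key : ∀ z : V, ∃ s x : V, z ∈ Shadow A u →
      s ∈ S ∧ Reach A s z ∧ Reach A x s ∧ ¬ Reach A s x ∧ x ∈ Shadow A u := by
    intro z
    by_cases hz : z ∈ Shadow A u
    · obtain ⟨s, hsS, hsz⟩ := hS z
      have hsSh : s ∈ Shadow A u := hsz.trans hz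
      -- SCC of s is contained in the shadow
      have hsub : SCC A s ⊆ Shadow A u := by
        intro w hw
        exact hw.2.trans hsSh
      have hnotinit : ¬ InitialSCC A (SCC A s) := fun h => hu ⟨SCC A s, h, hsub⟩
      have : ∃ x y, A x y ∧ y ∈ SCC A s ∧ x ∉ SCC A s := by
        by_contra hcon
        push_neg at hcon
        exact hnotinit ⟨⟨s, rfl⟩, fun x y hxy hy => hcon x y hxy hy⟩
      obtain ⟨x, y, hxy, hyC, hxC⟩ := this
      have hxs : Reach A x s := (Relation.ReflTransGen.single hxy).trans hyC.2
      refine ⟨s, x, fun _ => ⟨hsS, hsz, hxs, ?_, hxs.trans hsSh⟩⟩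
      intro hsx
      exact hxC ⟨hsx, hxs⟩
    · exact ⟨z, z, fun h => absurd h hz⟩
  choose s x hkey using key
  -- the sequence of z's
  let zs : ℕ → V := fun n => Nat.rec u (fun _ w => x w) n
  have hzs : ∀ n, zs n ∈ Shadow A u := by
    intro n
    induction n with
    | zero => exact Relation.ReflTransGen.refl
    | succ n ih => exact (hkey (zs n) ih).2.2.2.2
  have hstep : ∀ n, Reach A (s (zs (n+1))) (s (zs n)) := by
    intro n
    have h1 := hkey (zs (n+1)) (hzs (n+1))
    have h2 := hkey (zs n) (hzs n)
    exact (h1.2.1.trans h2.2.2.1)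
  have hchain : ∀ m n, m ≤ n → Reach A (s (zs n)) (s (zs m)) := by
    intro m n hmn
    induction n with
    | zero =>
        have : m = 0 := Nat.le_zero.mp hmn
        subst this; exact Relation.ReflTransGen.refl
    | succ n ih =>
        rcases Nat.lt_or_ge m (n+1) with h | h
        · exact (hstep n).trans (ih (Nat.lt_succ_iff.mp h))
        · have : m = n + 1 := le_antisymm hmn h
          subst this; exact Relation.ReflTransGen.refl
  have hinj : Function.Injective (fun n => s (zs n)) := by
    intro m n hmn
    simp only at hmn
    rcases lt_trichotomy m n with hlt | heq | hlt
    · have hreach : Reach A (s (zs n)) (zs (m+1)) :=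
        (hchain (m+1) n hlt).trans (hkey (zs (m+1)) (hzs (m+1))).2.1
      rw [← hmn] at hreach
      exact absurd hreach (hkey (zs m) (hzs m)).2.2.2.1
    · exact heq
    · have hreach : Reach A (s (zs m)) (zs (n+1)) :=
        (hchain (n+1) m hlt).trans (hkey (zs (n+1)) (hzs (n+1))).2.1
      rw [hmn] at hreach
      exact absurd hreach (hkey (zs n) (hzs n)).2.2.2.1
  apply Set.infinite_of_injective_forall_mem hinj
  intro n
  have h := hkey (zs n) (hzs n)
  exact ⟨h.1, h.2.1.trans (hzs n)⟩
end

section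
/- If B is a point-basis of a digraph D (a minimal point-reaching set), then B contains exactly one vertex from each initial strong component of D and no vertex from any non-initial strong component. -/
/-- A point-basis is a minimal point-reaching set. -/
def IsPointBasis {V : Type*} (A : V → V → Prop) (B : Set V) : Prop :=
  PointReaching A B ∧ ∀ B' ⊂ B, ¬ PointReaching A B'

/-- An initial component is closed under reachability-predecessors. -/
lemma initial_reach_closed {V : Type*} {A : V → V → Prop} {C : Set V}
    (hC : InitialSCC A C) {x y : V} (h : Reach A x y) (hy : y ∈ C) : x ∈ C := by
  induction h with
  | refl => exact hy
  | tail _ hab ih => exact ih (hC.2 _ _ hab hy)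

/-- If some other element of B reaches b, then B is not a point-basis unless b' = b fails:
removing b keeps B point-reaching, contradiction. -/
lemma no_redundant {V : Type*} {A : V → V → Prop} {B : Set V}
    (hB : IsPointBasis A B) {b b' : V} (hb : b ∈ B) (hb' : b' ∈ B)
    (hne : b' ≠ b) (hr : Reach A b' b) : False := by
  apply hB.2 (B \ {b}) ⟨Set.diff_subset, fun hsub => (hsub hb).2 rfl⟩
  intro v
  obtain ⟨s, hs, hsv⟩ := hB.1 v
  by_cases h : s = b
  · exact ⟨b', ⟨hb', hne⟩, hr.trans (h ▸ hsv)⟩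
  · exact ⟨s, ⟨hs, h⟩, hsv⟩

theorem pointBasis_one_vertex_per_initial_component {V : Type*}
    (A : V → V → Prop) (B : Set V) (hB : IsPointBasis A B) :
    (∀ C : Set V, InitialSCC A C → ∃! b : V, b ∈ B ∩ C) ∧
    (∀ b ∈ B, InitialSCC A (SCC A b)) := by
  constructor
  · intro C hC
    obtain ⟨v, rfl⟩ := hC.1
    obtain ⟨b, hbB, hbv⟩ := hB.1 v
    have hbC : b ∈ SCC A v := initial_reach_closed hC hbv ⟨Relation.ReflTransGen.refl, Relation.ReflTransGen.refl⟩
    refine ⟨b, ⟨hbB, hbC⟩, ?_⟩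
    rintro b' ⟨hb'B, hb'C⟩
    by_contra hne
    exact no_redundant hB hbB hb'B hne (hb'C.2.trans hbC.1)
  · intro b hb
    refine ⟨⟨b, rfl⟩, ?_⟩
    intro x y hxy hyC
    by_contra hxC
    -- x reaches b, but b does not reach x
    have hxb : Reach A x b := (Relation.ReflTransGen.single hxy).trans hyC.2
    obtain ⟨b', hb'B, hb'x⟩ := hB.1 x
    have hne : b' ≠ b := by
      rintro rfl
      exact hxC ⟨hb'x, hxb⟩
    exact no_redundant hB hb hb'B hne (hb'x.trans hxb)
end
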